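/- Let A be a seminormed ring. A nonempty closed subset Z of TopSpec(A) is irreducible if and only if there exists a spectrally reduced prime ideal p of A such that Z = V(p) = { q ∈ TopSpec(A) : p ⊆ q }. -/
import Mathlib


open Filter Topology

/-- A bounded power-multiplicative (nonarchimedean, submultiplicative) ring seminorm
on a seminormed commutative ring. -/
structure IsBddPowMulSeminorm {A : Type*} [SeminormedCommRing A] (φ : A → ℝ) : Prop where
  nonneg : ∀ f, 0 ≤ φ f
  map_zero : φ 0 = 0
  map_one : φ 1 = 1
  map_neg : ∀ f, φ (-f) = φ f
  nonarch : ∀ f g, φ (f + g) ≤ max (φ f) (φ g)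
  submul : ∀ f g, φ (f * g) ≤ φ f * φ g
  pow_mul : ∀ f, ∀ n : ℕ, 1 ≤ n → φ (f ^ n) = φ f ^ n
  bounded : ∃ C > 0, ∀ f, φ f ≤ C * ‖f‖

/-- An ideal is spectrally reduced if it is the kernel of some bounded
power-multiplicative seminorm. -/
def IsSpectrallyReduced {A : Type*} [SeminormedCommRing A] (I : Ideal A) : Prop :=
  ∃ φ : A → ℝ, IsBddPowMulSeminorm φ ∧ ∀ f, f ∈ I ↔ φ f = 0

/-- The topological spectrum: the subspace of `Spec A` consisting of the spectrally
reduced prime ideals, with the topology induced from the Zariski topology. -/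
abbrev TopSpec (A : Type*) [SeminormedCommRing A] : Type _ :=
  {p : PrimeSpectrum A // IsSpectrallyReduced p.asIdeal}

/-- Any bounded power-multiplicative seminorm is bounded by the norm itself. -/
lemma IsBddPowMulSeminorm.le_norm {A : Type*} [SeminormedCommRing A] {φ : A → ℝ}
    (hφ : IsBddPowMulSeminorm φ) (f : A) : φ f ≤ ‖f‖ := by
  obtain ⟨C, hC, hB⟩ := hφ.bounded
  by_contra h
  push_neg at h
  have hf0 : 0 ≤ ‖f‖ := norm_nonneg f
  have key : ∀ n : ℕ, 1 ≤ n → φ f ^ n ≤ C * ‖f‖ ^ n := by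
    intro n hn
    calc φ f ^ n = φ (f ^ n) := (hφ.pow_mul f n hn).symm
      _ ≤ C * ‖f ^ n‖ := hB _
      _ ≤ C * ‖f‖ ^ n :=
          mul_le_mul_of_nonneg_left (norm_pow_le' f (by omega)) hC.le
  rcases eq_or_lt_of_le hf0 with hf | hf
  · have hpos : 0 < φ f := lt_of_le_of_lt hf0 h
    have := key 1 le_rfl
    simp [← hf] at this
    linarith
  · have h1 : 1 < φ f / ‖f‖ := (one_lt_div hf).mpr h
    obtain ⟨n, hn⟩ := pow_unbounded_of_one_lt C h1
    have hn1 : C < (φ f / ‖f‖) ^ (n + 1) :=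
      hn.trans_le (pow_le_pow_right₀ h1.le (Nat.le_succ n))
    rw [div_pow, lt_div_iff₀ (by positivity)] at hn1
    exact absurd (key (n + 1) (by omega)) (by linarith)

/-- The vanishing ideal of any nonempty set of spectrally reduced primes is
spectrally reduced: take the sup of the witnessing seminorms. -/
lemma sup_spectrally_reduced {A : Type*} [SeminormedCommRing A]
    (Z : Set (TopSpec A)) (hZne : Z.Nonempty) :
    IsSpectrallyReduced (PrimeSpectrum.vanishingIdeal (Subtype.val '' Z)) := by
  classical
  set Φ : TopSpec A → A → ℝ := fun q => Classical.choose q.2 with hΦdef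
  have hΦ : ∀ q : TopSpec A, IsBddPowMulSeminorm (Φ q) ∧ ∀ f, f ∈ q.1.asIdeal ↔ Φ q f = 0 :=
    fun q => Classical.choose_spec q.2
  set φ : A → ℝ := fun f => sSup ((fun q => Φ q f) '' Z) with hφdef
  have hne : ∀ f : A, ((fun q => Φ q f) '' Z).Nonempty := fun f => hZne.image _
  have hbdd : ∀ f : A, BddAbove ((fun q => Φ q f) '' Z) := by
    intro f
    refine ⟨‖f‖, ?_⟩
    rintro _ ⟨q, hq, rfl⟩
    exact (hΦ q).1.le_norm f
  have hle : ∀ f : A, ∀ q ∈ Z, Φ q f ≤ φ f := fun f q hq =>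
    le_csSup (hbdd f) ⟨q, hq, rfl⟩
  have hsup_le : ∀ f : A, ∀ c : ℝ, (∀ q ∈ Z, Φ q f ≤ c) → φ f ≤ c := by
    intro f c h
    refine csSup_le (hne f) ?_
    rintro _ ⟨q, hq, rfl⟩; exact h q hq
  obtain ⟨q0, hq0⟩ := hZne
  have hnonneg : ∀ f, 0 ≤ φ f := fun f => le_trans ((hΦ q0).1.nonneg f) (hle f q0 hq0)
  refine ⟨φ, ⟨hnonneg, ?_, ?_, ?_, ?_, ?_, ?_, ?_⟩, ?_⟩
  · -- map_zero
    refine le_antisymm (hsup_le 0 0 fun q hq => le_of_eq (hΦ q).1.map_zero) (hnonneg 0)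
  · -- map_one
    refine le_antisymm (hsup_le 1 1 fun q hq => le_of_eq (hΦ q).1.map_one) ?_
    calc (1 : ℝ) = Φ q0 1 := (hΦ q0).1.map_one.symm
      _ ≤ φ 1 := hle 1 q0 hq0
  · -- map_neg
    intro f
    have : (fun q => Φ q (-f)) = fun q : TopSpec A => Φ q f :=
      funext fun q => (hΦ q).1.map_neg f
    simp only [hφdef, this]
  · -- nonarch
    intro f g
    refine hsup_le _ _ fun q hq => le_trans ((hΦ q).1.nonarch f g) ?_
    exact max_le_max (hle f q hq) (hle g q hq)
  · -- submul
    intro f g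
    refine hsup_le _ _ fun q hq => le_trans ((hΦ q).1.submul f g) ?_
    exact mul_le_mul (hle f q hq) (hle g q hq) ((hΦ q).1.nonneg g) (hnonneg f)
  · -- pow_mul
    intro f n hn
    have hn0 : n ≠ 0 := by omega
    refine le_antisymm ?_ ?_
    · refine hsup_le _ _ fun q hq => ?_
      rw [(hΦ q).1.pow_mul f n hn]
      exact pow_le_pow_left₀ ((hΦ q).1.nonneg f) (hle f q hq) n
    · set y := φ (f ^ n) with hy
      have hy0 : 0 ≤ y := hnonneg _
      have hroot : ∀ q ∈ Z, Φ q f ≤ y ^ (n⁻¹ : ℝ) := by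
        intro q hq
        have h1 : Φ q f ^ n ≤ y := by
          rw [← (hΦ q).1.pow_mul f n hn]; exact hle _ q hq
        have h2 : (y ^ (n⁻¹ : ℝ)) ^ n = y := Real.rpow_inv_natCast_pow hy0 hn0
        have h3 : Φ q f ^ n ≤ (y ^ (n⁻¹ : ℝ)) ^ n := by rw [h2]; exact h1
        exact (pow_le_pow_iff_left₀ ((hΦ q).1.nonneg f)
          (Real.rpow_nonneg hy0 _) hn0).mp h3
      have hφf : φ f ≤ y ^ (n⁻¹ : ℝ) := hsup_le _ _ hroot
      calc φ f ^ n ≤ (y ^ (n⁻¹ : ℝ)) ^ n :=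
            pow_le_pow_left₀ (hnonneg f) hφf n
        _ = y := Real.rpow_inv_natCast_pow hy0 hn0
  · -- bounded
    exact ⟨1, one_pos, fun f => by
      rw [one_mul]
      exact hsup_le f ‖f‖ fun q hq => (hΦ q).1.le_norm f⟩
  · -- kernel
    intro f
    rw [PrimeSpectrum.mem_vanishingIdeal]
    constructor
    · intro h
      refine le_antisymm (hsup_le f 0 fun q hq => le_of_eq ?_) (hnonneg f)
      exact ((hΦ q).2 f).mp (h q.1 ⟨q, hq, rfl⟩)
    · intro h x hx
      obtain ⟨q, hq, rfl⟩ := hx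
      refine ((hΦ q).2 f).mpr (le_antisymm ?_ ((hΦ q).1.nonneg f))
      rw [← h]; exact hle f q hq

/-- A nonempty closed subset of `TopSpec A` is irreducible iff it is of the form
`V(p) = { q ∈ TopSpec A : p ⊆ q }` for some spectrally reduced prime ideal `p`. -/
theorem topSpec_closed_irreducible_iff {A : Type*} [SeminormedCommRing A] [NormOneClass A]
    (hA : IsNonarchimedean (fun a : A => ‖a‖))
    (Z : Set (TopSpec A)) (hZc : IsClosed Z) (hZne : Z.Nonempty) :
    IsIrreducible Z ↔ ∃ p : PrimeSpectrum A, IsSpectrallyReduced p.asIdeal ∧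
      Z = {q : TopSpec A | p.asIdeal ≤ q.1.asIdeal} := by
  constructor
  · intro hZ
    obtain ⟨q0, hq0⟩ := hZne
    set J := PrimeSpectrum.vanishingIdeal (Subtype.val '' Z) with hJ
    have hJmem : ∀ f : A, f ∈ J ↔ ∀ q ∈ Z, f ∈ q.1.asIdeal := by
      intro f
      rw [hJ, PrimeSpectrum.mem_vanishingIdeal]
      constructor
      · intro h q hq; exact h q.1 ⟨q, hq, rfl⟩
      · rintro h _ ⟨q, hq, rfl⟩; exact h q hq
    have hJprime : J.IsPrime := by
      constructor
      · intro htop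
        have : (1 : A) ∈ J := htop ▸ Submodule.mem_top
        exact q0.1.2.ne_top (Ideal.eq_top_iff_one _ |>.mpr ((hJmem 1).mp this q0 hq0))
      · intro f g hfg
        by_contra h
        push_neg at h
        obtain ⟨hf, hg⟩ := h
        obtain ⟨q1, hq1, hq1f⟩ : ∃ q ∈ Z, f ∉ q.1.asIdeal := by
          by_contra h'; push_neg at h'; exact hf ((hJmem f).mpr h')
        obtain ⟨q2, hq2, hq2g⟩ : ∃ q ∈ Z, g ∉ q.1.asIdeal := by
          by_contra h'; push_neg at h'; exact hg ((hJmem g).mpr h')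
        have hUopen : ∀ a : A, IsOpen {q : TopSpec A | a ∉ q.1.asIdeal} := by
          intro a
          have : {q : TopSpec A | a ∉ q.1.asIdeal} =
              Subtype.val ⁻¹' (PrimeSpectrum.zeroLocus {a})ᶜ := by
            ext q; simp [PrimeSpectrum.mem_zeroLocus, Set.singleton_subset_iff]
          rw [this]
          exact ((PrimeSpectrum.isClosed_zeroLocus _).isOpen_compl).preimage
            continuous_subtype_val
        obtain ⟨q, hqZ, hqf, hqg⟩ := hZ.2 _ _ (hUopen f) (hUopen g)
          ⟨q1, hq1, hq1f⟩ ⟨q2, hq2, hq2g⟩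
        have : f * g ∈ q.1.asIdeal := (hJmem (f * g)).mp hfg q hqZ
        rcases q.1.2.mem_or_mem this with h | h
        · exact hqf h
        · exact hqg h
    refine ⟨⟨J, hJprime⟩, sup_spectrally_reduced Z ⟨q0, hq0⟩, ?_⟩
    ext q
    constructor
    · intro hq f hf
      exact (hJmem f).mp hf q hq
    · intro hq
      have : q ∈ closure Z := by
        rw [closure_subtype, ← PrimeSpectrum.zeroLocus_vanishingIdeal_eq_closure,
          PrimeSpectrum.mem_zeroLocus]
        exact fun f hf => hq hf
      rwa [hZc.closure_eq] at this
  · rintro ⟨p, hp, rfl⟩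
    have hcl : {q : TopSpec A | p.asIdeal ≤ q.1.asIdeal} =
        closure {(⟨p, hp⟩ : TopSpec A)} := by
      ext q
      rw [Set.mem_setOf_eq, closure_subtype, Set.image_singleton]
      exact PrimeSpectrum.le_iff_mem_closure p q.1
    rw [hcl]
    exact isIrreducible_singleton.closure
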